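/- Let k ≥ 2, N ≥ k, γ ∈ ℝ with γ > 0, and r, d₁, d₂ ≥ 0 with d₁ ≤ br and d₂ ≤ bCr for constants b ∈ (1,2) and C ≥ 1. Then there exists a constant c = c(b,C,k,γ) > 0 such that ∫₀^{d₁+r} ∫₀^{d₂+r} s^{k-2}(s+y)^γ y² ds dy ≤ c (r+d₂)^γ (r+d₁)² r^k. -/

import Mathlib

open MeasureTheory

/-- Doubling estimate (positive exponent case): for `γ > 0`, `d₁ ≤ br`, `d₂ ≤ bCr`,
`∫₀^{d₁+r} ∫₀^{d₂+r} s^{k-2}(s+y)^γ y² ds dy ≤ c (r+d₂)^γ (r+d₁)² r^k`. -/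
theorem stmt6 (k N : ℕ) (hk : 2 ≤ k) (hkN : k ≤ N) (γ : ℝ) (hγ : 0 < γ)
    (b C : ℝ) (hb1 : 1 < b) (hb2 : b < 2) (hC : 1 ≤ C) :
    ∃ c : ℝ, 0 < c ∧ ∀ r d₁ d₂ : ℝ, 0 ≤ r → 0 ≤ d₁ → 0 ≤ d₂ →
      d₁ ≤ b * r → d₂ ≤ b * C * r →
      (∫ y in Set.Ioc (0 : ℝ) (d₁ + r), ∫ s in Set.Ioc (0 : ℝ) (d₂ + r),
        s ^ ((k : ℝ) - 2) * (s + y) ^ γ * y ^ 2) ≤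
      c * (r + d₂) ^ γ * (r + d₁) ^ 2 * r ^ k := by
  have hbC0 : (0:ℝ) < b * C + 1 := by nlinarith
  have hb10 : (0:ℝ) < b + 1 := by linarith
  have hb20 : (0:ℝ) < b + 2 := by linarith
  have hke : (0:ℝ) ≤ (k:ℝ) - 2 := by
    have : (2:ℝ) ≤ (k:ℝ) := by exact_mod_cast hk
    linarith
  refine ⟨(b*C+1) ^ ((k:ℝ)-2) * (b*C+1) * (b+1) * (b+2) ^ γ, by positivity, ?_⟩
  intro r d₁ d₂ hr hd₁ hd₂ h1 h2
  rcases eq_or_lt_of_le hr with hr0 | hr0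
  · -- r = 0 forces d₁ = d₂ = 0, both sides vanish
    have hr0 : r = 0 := hr0.symm
    have hd10 : d₁ = 0 := le_antisymm (by simpa [hr0] using h1) hd₁
    subst hr0 hd10
    simp [Real.zero_rpow hγ.ne', Real.zero_rpow (by positivity : γ ≠ 0)]
  -- main case r > 0
  set A := r + d₂ with hA
  set B := r + d₁ with hB
  have hA0 : 0 ≤ A := by positivity
  have hB0 : 0 ≤ B := by positivity
  have hAr : A ≤ (b*C+1) * r := by rw [hA]; nlinarith
  have hBr : B ≤ (b+1) * r := by rw [hB]; nlinarith
  have hABr : A + B ≤ (b+2) * A := by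
    have : B ≤ (b+1) * A := le_trans hBr (by nlinarith)
    nlinarith
  set M := A ^ ((k:ℝ)-2) * (A + B) ^ γ * B ^ 2 with hM
  have hM0 : 0 ≤ M := by positivity
  -- pointwise bound on the inner integral
  have inner : ∀ y ∈ Set.Ioc (0:ℝ) (d₁ + r),
      ‖∫ s in Set.Ioc (0:ℝ) (d₂ + r), s ^ ((k : ℝ) - 2) * (s + y) ^ γ * y ^ 2‖ ≤ M * A := by
    intro y hy
    have hyB : y ≤ B := by rw [hB]; linarith [hy.2]
    have hy0 : 0 < y := hy.1
    have : ‖∫ s in Set.Ioc (0:ℝ) (d₂ + r), s ^ ((k : ℝ) - 2) * (s + y) ^ γ * y ^ 2‖ ≤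
        M * (volume (Set.Ioc (0:ℝ) (d₂ + r))).toReal := by
      apply norm_setIntegral_le_of_norm_le_const (by simp)
      intro s hs
      have hs0 : 0 < s := hs.1
      have hsA : s ≤ A := by rw [hA]; linarith [hs.2]
      have hnn : 0 ≤ s ^ ((k : ℝ) - 2) * (s + y) ^ γ * y ^ 2 := by positivity
      rw [Real.norm_of_nonneg hnn, hM]
      gcongr
      all_goals first | exact hs0.le | linarith
    calc ‖∫ s in Set.Ioc (0:ℝ) (d₂ + r), s ^ ((k : ℝ) - 2) * (s + y) ^ γ * y ^ 2‖ ≤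
        M * (volume (Set.Ioc (0:ℝ) (d₂ + r))).toReal := this
      _ ≤ M * A := by
          rw [Real.volume_Ioc, sub_zero, ENNReal.toReal_ofReal (by linarith)]
          gcongr
          rw [hA]; linarith
  -- bound the outer integral
  have outer : ‖∫ y in Set.Ioc (0:ℝ) (d₁ + r), ∫ s in Set.Ioc (0:ℝ) (d₂ + r),
      s ^ ((k : ℝ) - 2) * (s + y) ^ γ * y ^ 2‖ ≤ (M * A) * B := by
    have : ‖∫ y in Set.Ioc (0:ℝ) (d₁ + r), ∫ s in Set.Ioc (0:ℝ) (d₂ + r),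
        s ^ ((k : ℝ) - 2) * (s + y) ^ γ * y ^ 2‖ ≤
        (M * A) * (volume (Set.Ioc (0:ℝ) (d₁ + r))).toReal :=
      norm_setIntegral_le_of_norm_le_const (by simp) inner
    refine this.trans ?_
    rw [Real.volume_Ioc, sub_zero, ENNReal.toReal_ofReal (by linarith)]
    have : d₁ + r ≤ B := by rw [hB]; linarith
    gcongr
  refine (le_trans (le_abs_self _) outer).trans ?_
  -- final arithmetic
  have key : M * A * B ≤
      (((b*C+1)*r) ^ ((k:ℝ)-2) * ((b*C+1)*r) * ((b+1)*r)) * ((b+2)*A) ^ γ * B ^ 2 := by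
    rw [hM]
    calc A ^ ((k:ℝ)-2) * (A + B) ^ γ * B ^ 2 * A * B
        = (A ^ ((k:ℝ)-2) * A * B) * (A + B) ^ γ * B ^ 2 := by ring
      _ ≤ (((b*C+1)*r) ^ ((k:ℝ)-2) * ((b*C+1)*r) * ((b+1)*r)) * ((b+2)*A) ^ γ * B ^ 2 := by
          gcongr
  refine key.trans (le_of_eq ?_)
  rw [Real.mul_rpow (by positivity) hr0.le, Real.mul_rpow (by positivity) hA0]
  have hrk : r ^ ((k:ℝ)-2) * r * r = r ^ k := by
    have : r ^ ((k:ℝ)-2) * r * r = r ^ ((k:ℝ)-2) * r ^ (2:ℝ) := by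
      rw [Real.rpow_two]; ring
    rw [this, ← Real.rpow_add hr0, sub_add_cancel, Real.rpow_natCast]
  calc (b*C+1) ^ ((k:ℝ)-2) * r ^ ((k:ℝ)-2) * ((b*C+1)*r) * ((b+1)*r) *
        ((b+2) ^ γ * A ^ γ) * B ^ 2
      = ((b*C+1) ^ ((k:ℝ)-2) * (b*C+1) * (b+1) * (b+2) ^ γ) * A ^ γ * B ^ 2 *
        (r ^ ((k:ℝ)-2) * r * r) := by ring
    _ = (b*C+1) ^ ((k:ℝ)-2) * (b*C+1) * (b+1) * (b+2) ^ γ * (r + d₂) ^ γ * (r + d₁) ^ 2 * r ^ k := by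
        rw [hrk, hA, hB]
        try ring
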